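/- There exists a universal constant C > 0 such that for every n ≥ 2 and every B ≥ 1, the critical Erdős–Rényi random graph G(n,1/n) satisfies E[ (1/n) Σ_{x ∈ [n]} ( diam(C(x)) ∧ (B n^{1/3}) )² ] ≤ C B n^{1/3}; equivalently, E[ E_S[ ( diam(S₁) ∧ (B n^{1/3}) )² ] ] ≤ C B n^{1/3}. -/

import Mathlib

open MeasureTheory Filter
open scoped ENNReal

/-- The Erdős–Rényi `G(n, 1/n)` measure on edge configurations of `K_n`:
each potential edge is retained (`true`) independently with probability `1/n`. -/
noncomputable def erMeasure (n : ℕ) : Measure (Sym2 (Fin n) → Bool) :=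
  Measure.pi fun _ => (PMF.bernoulli (min (n : ℝ≥0∞)⁻¹ 1).toNNReal
    (by simpa using ENNReal.toNNReal_mono ENNReal.one_ne_top (min_le_right ((n : ℝ≥0∞)⁻¹) 1))).toMeasure

instance (n : ℕ) : IsProbabilityMeasure (erMeasure n) := by
  unfold erMeasure; infer_instance

/-- The simple graph on `Fin n` determined by an edge configuration. -/
def graphOf {n : ℕ} (ω : Sym2 (Fin n) → Bool) : SimpleGraph (Fin n) where
  Adj u v := u ≠ v ∧ ω s(u, v) = true
  symm := by
    constructor
    intro u v h
    exact ⟨Ne.symm h.1, by rw [Sym2.eq_swap]; exact h.2⟩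
  loopless := by
    constructor
    intro u h
    exact h.1 rfl

/-- Size of the connected component of `v`. -/
noncomputable def compSize {n : ℕ} (G : SimpleGraph (Fin n)) (v : Fin n) : ℕ :=
  Nat.card {w : Fin n | G.Reachable v w}

/-- Diameter of a finite graph: maximal distance between two vertices. -/
noncomputable def gdiam {n : ℕ} (G : SimpleGraph (Fin n)) : ℕ :=
  Finset.univ.sup fun p : Fin n × Fin n => G.dist p.1 p.2

open scoped Classical in
/-- Diameter of the connected component of `x`. -/
noncomputable def compDiam {n : ℕ} (G : SimpleGraph (Fin n)) (x : Fin n) : ℕ :=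
  Finset.univ.sup fun p : Fin n × Fin n =>
    if G.Reachable x p.1 ∧ G.Reachable x p.2 then G.dist p.1 p.2 else 0

/-- Product of the weights of the edges of `T`. -/
noncomputable def treeWeight {n : ℕ} (w : Sym2 (Fin n) → ℝ) (T : SimpleGraph (Fin n)) : ℝ :=
  letI : Fintype T.edgeSet := Fintype.ofFinite _
  ∏ e ∈ T.edgeSet.toFinset, w e

open scoped Classical in
/-- Probability that the `w`-weighted uniform spanning tree of `K_n` lies in `E`. -/
noncomputable def ustProb {n : ℕ} (w : Sym2 (Fin n) → ℝ) (E : Set (SimpleGraph (Fin n))) : ℝ :=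
  (∑ T ∈ Finset.univ.filter (fun T : SimpleGraph (Fin n) => T.IsTree ∧ T ∈ E), treeWeight w T) /
    (∑ T ∈ Finset.univ.filter (fun T : SimpleGraph (Fin n) => T.IsTree), treeWeight w T)

/-- The random weights: heavy edges get weight `n^(1+γ)`, the others weight `1`. -/
noncomputable def weightFn (n : ℕ) (γ : ℝ) (ω : Sym2 (Fin n) → Bool) (e : Sym2 (Fin n)) : ℝ :=
  if ω e then (n : ℝ) ^ ((1 : ℝ) + γ) else 1

namespace ERP
open Finset

noncomputable section

abbrev Cfg (n : ℕ) := Sym2 (Fin n) → Bool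

def wt (n : ℕ) (b : Bool) : ℝ := if b then (n : ℝ)⁻¹ else 1 - (n : ℝ)⁻¹

def W (n : ℕ) (ω : Cfg n) : ℝ := ∏ e : Sym2 (Fin n), wt n (ω e)

open scoped Classical in
def Pr (n : ℕ) (f : Cfg n → Prop) : ℝ := ∑ ω : Cfg n, if f ω then W n ω else 0

variable {n : ℕ}

lemma wt_nonneg (hn : 2 ≤ n) (b : Bool) : 0 ≤ wt n b := by
  have h1 : (n : ℝ)⁻¹ ≤ 1 := by
    rw [inv_le_one_iff₀]; right; exact_mod_cast Nat.one_le_of_lt hn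
  have h0 : (0:ℝ) ≤ (n:ℝ)⁻¹ := by positivity
  cases b <;> simp [wt] <;> linarith

lemma wt_pos (hn : 2 ≤ n) (b : Bool) : 0 < wt n b := by
  have h2 : (2:ℝ) ≤ n := by exact_mod_cast hn
  have h1 : (n : ℝ)⁻¹ < 1 := by
    rw [inv_lt_one_iff₀]; right; linarith
  have h0 : (0:ℝ) < (n:ℝ)⁻¹ := by positivity
  cases b <;> simp [wt] <;> linarith

lemma wt_total (n : ℕ) : wt n true + wt n false = 1 := by simp [wt]

lemma W_nonneg (hn : 2 ≤ n) (ω : Cfg n) : 0 ≤ W n ω :=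
  Finset.prod_nonneg fun e _ => wt_nonneg hn _

lemma sum_W (hn : 2 ≤ n) : ∑ ω : Cfg n, W n ω = 1 := by
  have h := (Fintype.prod_sum (fun (e : Sym2 (Fin n)) (b : Bool) => wt n b))
  unfold W
  rw [← h]
  simp [wt_total]

lemma Pr_nonneg (hn : 2 ≤ n) (f : Cfg n → Prop) : 0 ≤ Pr n f := by
  classical
  unfold Pr
  apply Finset.sum_nonneg
  intro ω _
  split <;> [exact W_nonneg hn ω; exact le_rfl]


lemma Pr_le_one (hn : 2 ≤ n) (f : Cfg n → Prop) : Pr n f ≤ 1 := by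
  classical
  unfold Pr
  rw [← sum_W hn]
  apply Finset.sum_le_sum
  intro ω _
  split <;> [exact le_rfl; exact W_nonneg hn ω]

lemma Pr_mono (hn : 2 ≤ n) {f g : Cfg n → Prop} (h : ∀ ω, f ω → g ω) : Pr n f ≤ Pr n g := by
  classical
  unfold Pr
  apply Finset.sum_le_sum
  intro ω _
  by_cases hf : f ω
  · rw [if_pos hf, if_pos (h ω hf)]
  · rw [if_neg hf]
    split <;> [exact W_nonneg hn ω; exact le_rfl]

lemma sum_split (e : Sym2 (Fin n)) (F : Cfg n → ℝ) :
    ∑ ω : Cfg n, F ω =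
      ∑ ω ∈ univ.filter (fun ω : Cfg n => ω e = false), (F ω + F (Function.update ω e true)) := by
  classical
  rw [Finset.sum_add_distrib]
  rw [← Finset.sum_filter_add_sum_filter_not univ (fun ω : Cfg n => ω e = false) F]
  congr 1
  apply Finset.sum_nbij' (fun ω => Function.update ω e false) (fun ω => Function.update ω e true)
  · intro ω hω
    simp
  · intro ω hω
    simp only [mem_filter, mem_univ, true_and, Bool.not_eq_false] at hω ⊢
    simp [hω]
  · intro ω hω
    simp only [mem_filter, mem_univ, true_and, Bool.not_eq_false] at hω
    rw [Function.update_idem, ← hω, Function.update_eq_self]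
  · intro ω hω
    simp only [mem_filter, mem_univ, true_and] at hω
    rw [Function.update_idem, ← hω, Function.update_eq_self]
  · intro ω hω
    simp only [mem_filter, mem_univ, true_and, Bool.not_eq_false] at hω
    rw [Function.update_idem, ← hω, Function.update_eq_self]

lemma W_update (ω : Cfg n) (e : Sym2 (Fin n)) (b : Bool) :
    W n (Function.update ω e b) = wt n b * ∏ j ∈ univ.erase e, wt n (ω j) := by
  unfold W
  rw [← Finset.mul_prod_erase _ _ (mem_univ e), Function.update_self]
  congr 1
  apply Finset.prod_congr rfl
  intro j hj
  rw [Function.update_of_ne (Finset.mem_erase.1 hj).1]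

lemma W_eq_wt_mul (ω : Cfg n) (e : Sym2 (Fin n)) :
    W n ω = wt n (ω e) * ∏ j ∈ univ.erase e, wt n (ω j) :=
  (Finset.mul_prod_erase _ _ (mem_univ e)).symm

/-- Integrate out a single coordinate. -/
lemma one_step (e : Sym2 (Fin n)) (H : Cfg n → Bool → ℝ)
    (hH : ∀ ω b b', H (Function.update ω e b') b = H ω b) :
    ∑ ω : Cfg n, W n ω * H ω (ω e) =
      ∑ ω : Cfg n, W n ω * (wt n true * H ω true + wt n false * H ω false) := by
  classical
  rw [sum_split e (fun ω => W n ω * H ω (ω e)),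
      sum_split e (fun ω => W n ω * (wt n true * H ω true + wt n false * H ω false))]
  apply Finset.sum_congr rfl
  intro ω hω
  simp only [mem_filter, mem_univ, true_and] at hω
  have hωe : Function.update ω e true e = true := Function.update_self _ _ _
  have hW : W n ω = wt n false * ∏ j ∈ univ.erase e, wt n (ω j) := by
    rw [W_eq_wt_mul ω e, hω]
  rw [W_update, hωe, hω, hW, hH ω false true, hH ω true true]
  have h1 := wt_total n
  have h2 : wt n false = 1 - wt n true := by linarith
  rw [h2]; ring

lemma ind_step (x : Fin n) : ∀ (K : Finset (Fin n)), (∀ y ∈ K, y ≠ x) →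
    ∀ (g : Fin n → Cfg n → Bool → ℝ),
    (∀ y ∈ K, ∀ y' ∈ K, ∀ ω b b', g y (Function.update ω s(x,y') b') b = g y ω b) →
    ∀ (F : Cfg n → ℝ), (∀ y' ∈ K, ∀ ω b', F (Function.update ω s(x,y') b') = F ω) →
    ∑ ω : Cfg n, W n ω * (F ω * ∏ y ∈ K, g y ω (ω s(x,y))) =
      ∑ ω : Cfg n, W n ω * (F ω * ∏ y ∈ K,
        (wt n true * g y ω true + wt n false * g y ω false)) := by
  classical
  intro K
  induction K using Finset.induction_on with
  | empty => intro _ g _ F _; simp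
  | @insert y₀ K' hy₀ IH =>
    intro hK g hg F hF
    have hy₀x : y₀ ≠ x := hK y₀ (mem_insert_self _ _)
    have hK' : ∀ y ∈ K', y ≠ x := fun y hy => hK y (mem_insert_of_mem hy)
    have hcoord : ∀ y ∈ K', s(x,y₀) ≠ s(x,y) := by
      intro y hy h
      rw [Sym2.eq_iff] at h
      rcases h with ⟨-, h2⟩ | ⟨h1, -⟩
      · exact hy₀ (h2 ▸ hy)
      · exact hK' y hy h1.symm
    have hg' : ∀ y ∈ K', ∀ y' ∈ K', ∀ ω b b',
        g y (Function.update ω s(x,y') b') b = g y ω b := fun y hy y' hy' =>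
      hg y (mem_insert_of_mem hy) y' (mem_insert_of_mem hy')
    -- Step A : apply IH with spectator F₁
    have stepA := IH hK' g hg' (fun ω => F ω * g y₀ ω (ω s(x,y₀))) (by
      intro y' hy' ω b'
      have h1 : F (Function.update ω s(x,y') b') = F ω := hF y' (mem_insert_of_mem hy') ω b'
      have h2 : (Function.update ω s(x,y') b') s(x,y₀) = ω s(x,y₀) :=
        Function.update_of_ne (hcoord y' hy') _ _
      rw [h1, h2, hg y₀ (mem_insert_self _ _) y' (mem_insert_of_mem hy')])
    -- Step B : integrate out the coordinate s(x,y₀)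
    have stepB := one_step (n := n) s(x,y₀)
      (fun ω b => F ω * g y₀ ω b * ∏ y ∈ K', (wt n true * g y ω true + wt n false * g y ω false))
      (by
        intro ω b b'
        rw [hF y₀ (mem_insert_self _ _) ω b', hg y₀ (mem_insert_self _ _) y₀ (mem_insert_self _ _)]
        congr 1
        apply Finset.prod_congr rfl
        intro y hy
        rw [hg y (mem_insert_of_mem hy) y₀ (mem_insert_self _ _),
            hg y (mem_insert_of_mem hy) y₀ (mem_insert_self _ _)])
    calc ∑ ω : Cfg n, W n ω * (F ω * ∏ y ∈ insert y₀ K', g y ω (ω s(x,y)))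
        = ∑ ω : Cfg n, W n ω * ((F ω * g y₀ ω (ω s(x,y₀))) * ∏ y ∈ K', g y ω (ω s(x,y))) := by
          apply Finset.sum_congr rfl; intro ω _
          rw [Finset.prod_insert hy₀]; ring
      _ = ∑ ω : Cfg n, W n ω * ((F ω * g y₀ ω (ω s(x,y₀))) * ∏ y ∈ K',
            (wt n true * g y ω true + wt n false * g y ω false)) := stepA
      _ = ∑ ω : Cfg n, W n ω * (F ω * g y₀ ω (ω s(x,y₀)) * ∏ y ∈ K',
            (wt n true * g y ω true + wt n false * g y ω false)) := by
          apply Finset.sum_congr rfl; intro ω _; ring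
      _ = ∑ ω : Cfg n, W n ω * (wt n true * (F ω * g y₀ ω true * ∏ y ∈ K',
            (wt n true * g y ω true + wt n false * g y ω false))
            + wt n false * (F ω * g y₀ ω false * ∏ y ∈ K',
            (wt n true * g y ω true + wt n false * g y ω false))) := stepB
      _ = ∑ ω : Cfg n, W n ω * (F ω * ∏ y ∈ insert y₀ K',
            (wt n true * g y ω true + wt n false * g y ω false)) := by
          apply Finset.sum_congr rfl; intro ω _
          rw [Finset.prod_insert hy₀]; ring

def HLP (ω : Cfg n) (y : Fin n) (B : Finset (Fin n)) (s : ℕ) : Prop :=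
  ∃ z, ∃ w : (graphOf ω).Walk y z, w.IsPath ∧ s ≤ w.length ∧ ∀ v ∈ w.support, v ∉ B

def q (n : ℕ) (s : ℕ) (y : Fin n) (B : Finset (Fin n)) : ℝ :=
  Pr n (fun ω => HLP ω y B s)

lemma mem_edgeSet_graphOf {ω : Cfg n} {e : Sym2 (Fin n)} :
    e ∈ (graphOf ω).edgeSet ↔ (¬ e.IsDiag ∧ ω e = true) := by
  induction e using Sym2.ind with
  | _ a b => simp [SimpleGraph.mem_edgeSet, graphOf, Sym2.mk_isDiag_iff]

lemma mem_support_of_mem_edges {ω : Cfg n} {u z : Fin n} (w : (graphOf ω).Walk u z)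
    {e : Sym2 (Fin n)} (he : e ∈ w.edges) {v : Fin n} (hv : v ∈ e) : v ∈ w.support := by
  induction e using Sym2.ind with
  | _ a b =>
    rw [Sym2.mem_iff] at hv
    rcases hv with rfl | rfl
    · exact w.fst_mem_support_of_mem_edges he
    · exact w.snd_mem_support_of_mem_edges he

lemma HLP_congr {ω ω' : Cfg n} {B : Finset (Fin n)} {y : Fin n} {s : ℕ}
    (h : ∀ e : Sym2 (Fin n), (∀ v ∈ e, v ∉ B) → ω e = ω' e) (hl : HLP ω y B s) :
    HLP ω' y B s := by
  obtain ⟨z, w, hp, hlen, hsupp⟩ := hl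
  have hedges : ∀ e ∈ w.edges, e ∈ (graphOf ω').edgeSet := by
    intro e he
    have h1 : e ∈ (graphOf ω).edgeSet := w.edges_subset_edgeSet he
    rw [mem_edgeSet_graphOf] at h1 ⊢
    refine ⟨h1.1, ?_⟩
    rw [← h e fun v hv => hsupp v (mem_support_of_mem_edges w he hv)]
    exact h1.2
  refine ⟨z, w.transfer _ hedges, hp.transfer _, ?_, ?_⟩
  · rw [SimpleGraph.Walk.length_transfer]; exact hlen
  · rw [SimpleGraph.Walk.support_transfer]; exact hsupp

lemma HLP_update {B : Finset (Fin n)} {e' : Sym2 (Fin n)} {v0 : Fin n}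
    (hv0 : v0 ∈ e') (hvB : v0 ∈ B) (ω : Cfg n) (b : Bool) (y : Fin n) (s : ℕ) :
    HLP (Function.update ω e' b) y B s ↔ HLP ω y B s := by
  have key : ∀ (e : Sym2 (Fin n)), (∀ v ∈ e, v ∉ B) → e ≠ e' := by
    rintro e he rfl
    exact he v0 hv0 hvB
  constructor
  · apply HLP_congr
    intro e he
    rw [Function.update_of_ne (key e he)]
  · apply HLP_congr
    intro e he
    rw [Function.update_of_ne (key e he)]


lemma gbar_eq (hn : 2 ≤ n) (P : Prop) [Decidable P] :
    wt n true * (if P ∧ (true:Bool) = true then (0:ℝ) else 1)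
      + wt n false * (if P ∧ (false:Bool) = true then (0:ℝ) else 1)
      = if P then wt n false else 1 := by
  by_cases hP : P <;> simp [hP]
  have := wt_total n
  linarith

open scoped Classical in
lemma union_eq (hn : 2 ≤ n) (x : Fin n) (B : Finset (Fin n)) (hxB : x ∈ B) (s : ℕ) :
    Pr n (fun ω => ∃ y ∈ univ \ B, ω s(x,y) = true ∧ HLP ω y B s) =
      1 - ∑ ω : Cfg n, W n ω *
        (wt n false) ^ (((univ \ B).filter (fun y => HLP ω y B s)).card) := by
  classical
  set Y := univ \ B with hY
  have hYx : ∀ y ∈ Y, y ≠ x := by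
    intro y hy
    simp only [hY, Finset.mem_sdiff] at hy
    rintro rfl
    exact hy.2 hxB
  set g : Fin n → Cfg n → Bool → ℝ :=
    fun y ω b => if HLP ω y B s ∧ b = true then (0:ℝ) else 1 with hg_def
  have hpoint : ∀ ω : Cfg n,
      (if (∃ y ∈ Y, ω s(x,y) = true ∧ HLP ω y B s) then W n ω else 0)
        = W n ω * (1 - ∏ y ∈ Y, g y ω (ω s(x,y))) := by
    intro ω
    by_cases hex : ∃ y ∈ Y, ω s(x,y) = true ∧ HLP ω y B s
    · rw [if_pos hex]
      obtain ⟨y, hy, h1, h2⟩ := hex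
      have : ∏ y ∈ Y, g y ω (ω s(x,y)) = 0 := by
        apply Finset.prod_eq_zero hy
        rw [hg_def]
        simp only
        rw [if_pos ⟨h2, h1⟩]
      rw [this]; ring
    · rw [if_neg hex]
      push_neg at hex
      have : ∏ y ∈ Y, g y ω (ω s(x,y)) = 1 := by
        apply Finset.prod_eq_one
        intro y hy
        rw [hg_def]
        simp only
        rw [if_neg]
        rintro ⟨hh, hb⟩
        exact hex y hy hb hh
      rw [this]; ring
  have hg : ∀ y ∈ Y, ∀ y' ∈ Y, ∀ (ω : Cfg n) (b b' : Bool),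
      g y (Function.update ω s(x,y') b') b = g y ω b := by
    intro y _ y' _ ω b b'
    rw [hg_def]
    simp only
    rw [HLP_update (Sym2.mem_mk_left x y') hxB]
  have hmain := ind_step x Y hYx g hg (fun _ => 1) (fun _ _ _ _ => rfl)
  have hbar : ∀ ω : Cfg n,
      ∏ y ∈ Y, (wt n true * g y ω true + wt n false * g y ω false)
        = (wt n false) ^ ((Y.filter (fun y => HLP ω y B s)).card) := by
    intro ω
    have : ∀ y ∈ Y, (wt n true * g y ω true + wt n false * g y ω false)
        = if HLP ω y B s then wt n false else 1 := by
      intro y _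
      rw [hg_def]
      exact gbar_eq hn _
    rw [Finset.prod_congr rfl this, Finset.prod_ite, Finset.prod_const, Finset.prod_const,
      one_pow, mul_one]
  calc Pr n (fun ω => ∃ y ∈ Y, ω s(x,y) = true ∧ HLP ω y B s)
      = ∑ ω : Cfg n, W n ω * (1 - ∏ y ∈ Y, g y ω (ω s(x,y))) := by
        unfold Pr
        apply Finset.sum_congr rfl
        intro ω _
        rw [← hpoint ω]
        congr 1
    _ = ∑ ω : Cfg n, W n ω - ∑ ω : Cfg n, W n ω * (1 * ∏ y ∈ Y, g y ω (ω s(x,y))) := by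
        rw [← Finset.sum_sub_distrib]
        exact Finset.sum_congr rfl fun ω _ => by ring
    _ = 1 - ∑ ω : Cfg n, W n ω * (1 * ∏ y ∈ Y,
          (wt n true * g y ω true + wt n false * g y ω false)) := by
        rw [sum_W hn, hmain]
    _ = 1 - ∑ ω : Cfg n, W n ω *
          (wt n false) ^ ((Y.filter (fun y => HLP ω y B s)).card) := by
        congr 1
        exact Finset.sum_congr rfl fun ω _ => by rw [one_mul, hbar ω]


lemma exp_jensen (hn : 2 ≤ n) (X : Cfg n → ℝ) :
    Real.exp (∑ ω : Cfg n, W n ω * X ω) ≤ ∑ ω : Cfg n, W n ω * Real.exp (X ω) := by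
  set m := ∑ ω : Cfg n, W n ω * X ω with hm
  have h : ∀ ω : Cfg n, W n ω * (Real.exp m * (X ω - m + 1)) ≤ W n ω * Real.exp (X ω) := by
    intro ω
    apply mul_le_mul_of_nonneg_left _ (W_nonneg hn ω)
    calc Real.exp m * (X ω - m + 1) ≤ Real.exp m * Real.exp (X ω - m) :=
          mul_le_mul_of_nonneg_left (Real.add_one_le_exp (X ω - m)) (Real.exp_nonneg m)
      _ = Real.exp (X ω) := by rw [← Real.exp_add]; ring_nf
  calc Real.exp m = ∑ ω : Cfg n, W n ω * (Real.exp m * (X ω - m + 1)) := by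
        have hpt : ∀ ω : Cfg n, W n ω * (Real.exp m * (X ω - m + 1))
            = Real.exp m * (W n ω * X ω) - (Real.exp m * m) * W n ω + Real.exp m * W n ω :=
          fun ω => by ring
        rw [Finset.sum_congr rfl fun ω _ => hpt ω]
        rw [Finset.sum_add_distrib, Finset.sum_sub_distrib, ← Finset.mul_sum, ← Finset.mul_sum,
          ← Finset.mul_sum, ← hm, sum_W hn]
        ring
    _ ≤ ∑ ω : Cfg n, W n ω * Real.exp (X ω) := Finset.sum_le_sum fun ω _ => h ω

lemma hlp_succ {ω : Cfg n} {x : Fin n} {A : Finset (Fin n)} {s : ℕ}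
    (h : HLP ω x A (s+1)) :
    ∃ y ∈ univ \ insert x A, ω s(x,y) = true ∧ HLP ω y (insert x A) s := by
  obtain ⟨z, w, hp, hlen, hsupp⟩ := h
  cases w with
  | nil => simp at hlen
  | @cons _ y _ h w' =>
    obtain ⟨hne, hωe⟩ := id h
    rw [SimpleGraph.Walk.cons_isPath_iff] at hp
    have hysupp : y ∈ w'.support := w'.start_mem_support
    have hy_notA : ∀ v ∈ w'.support, v ∉ A := by
      intro v hv
      apply hsupp
      rw [SimpleGraph.Walk.support_cons]
      exact List.mem_cons_of_mem _ hv
    refine ⟨y, ?_, hωe, z, w', hp.1, ?_, ?_⟩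
    · rw [Finset.mem_sdiff]
      refine ⟨mem_univ _, ?_⟩
      rw [Finset.mem_insert]
      rintro (rfl | hyA)
      · exact hne rfl
      · exact hy_notA y hysupp hyA
    · rw [SimpleGraph.Walk.length_cons] at hlen
      omega
    · intro v hv
      rw [Finset.mem_insert]
      rintro (rfl | hvA)
      · exact hp.2 hv
      · exact hy_notA v hv hvA

open scoped Classical in
lemma q_step (hn : 2 ≤ n) (x : Fin n) (A : Finset (Fin n)) (s : ℕ) :
    q n (s+1) x A ≤
      1 - Real.exp (Real.log (wt n false) *
        ∑ y ∈ univ \ insert x A, q n s y (insert x A)) := by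
  classical
  set B := insert x A with hB
  set Y := univ \ B with hYdef
  have hxB : x ∈ B := mem_insert_self x A
  set N : Cfg n → ℕ := fun ω => ((Y.filter (fun y => HLP ω y B s)).card) with hN
  have step1 : q n (s+1) x A ≤ Pr n (fun ω => ∃ y ∈ Y, ω s(x,y) = true ∧ HLP ω y B s) :=
    Pr_mono hn fun ω h => hlp_succ h
  have step2 := union_eq hn x B hxB s
  have hswap : ∑ ω : Cfg n, W n ω * (N ω : ℝ) = ∑ y ∈ Y, q n s y B := by
    have hcast : ∀ ω : Cfg n, (N ω : ℝ) = ∑ y ∈ Y, (if HLP ω y B s then (1:ℝ) else 0) := by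
      intro ω
      rw [hN]
      simp only
      rw [Finset.card_filter, Nat.cast_sum]
      exact Finset.sum_congr rfl fun y _ => by split <;> simp
    calc ∑ ω : Cfg n, W n ω * (N ω : ℝ)
        = ∑ ω : Cfg n, ∑ y ∈ Y, (if HLP ω y B s then W n ω else 0) := by
          apply Finset.sum_congr rfl
          intro ω _
          rw [hcast ω, Finset.mul_sum]
          exact Finset.sum_congr rfl fun y _ => by split <;> simp
      _ = ∑ y ∈ Y, ∑ ω : Cfg n, (if HLP ω y B s then W n ω else 0) := Finset.sum_comm
      _ = ∑ y ∈ Y, q n s y B := by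
          apply Finset.sum_congr rfl
          intro y _
          rw [q, Pr]
  have hexp : ∀ ω : Cfg n,
      (wt n false) ^ (N ω) = Real.exp ((N ω : ℝ) * Real.log (wt n false)) := by
    intro ω
    rw [Real.exp_nat_mul, Real.exp_log (wt_pos hn false)]
  have step3 : Real.exp (Real.log (wt n false) * ∑ y ∈ Y, q n s y B)
      ≤ ∑ ω : Cfg n, W n ω * (wt n false) ^ (N ω) := by
    have hj := exp_jensen hn (fun ω => (N ω : ℝ) * Real.log (wt n false))
    have harg : ∑ ω : Cfg n, W n ω * ((N ω : ℝ) * Real.log (wt n false))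
        = Real.log (wt n false) * ∑ y ∈ Y, q n s y B := by
      rw [← hswap, Finset.mul_sum]
      exact Finset.sum_congr rfl fun ω _ => by ring
    rw [harg] at hj
    calc Real.exp (Real.log (wt n false) * ∑ y ∈ Y, q n s y B)
        ≤ ∑ ω : Cfg n, W n ω * Real.exp ((N ω : ℝ) * Real.log (wt n false)) := hj
      _ = ∑ ω : Cfg n, W n ω * (wt n false) ^ (N ω) :=
          Finset.sum_congr rfl fun ω _ => by rw [hexp ω]
  calc q n (s+1) x A ≤ Pr n (fun ω => ∃ y ∈ Y, ω s(x,y) = true ∧ HLP ω y B s) := step1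
    _ = 1 - ∑ ω : Cfg n, W n ω * (wt n false) ^ (N ω) := step2
    _ ≤ 1 - Real.exp (Real.log (wt n false) * ∑ y ∈ Y, q n s y B) := by linarith [step3]


lemma q_zero_le_one (hn : 2 ≤ n) (x : Fin n) (A : Finset (Fin n)) : q n 0 x A ≤ 1 :=
  Pr_le_one hn _

lemma q_bound (hn : 2 ≤ n) : ∀ (s : ℕ) (x : Fin n) (A : Finset (Fin n)),
    q n s x A ≤ 4 / ((s:ℝ) + 4) := by
  intro s
  induction s with
  | zero =>
    intro x A
    have h := Pr_le_one hn (fun ω => HLP ω x A 0)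
    have : q n 0 x A ≤ 1 := h
    norm_num
    linarith
  | succ s IH =>
    intro x A
    classical
    have hn0 : (0:ℝ) < n := by
      have : (2:ℝ) ≤ n := by exact_mod_cast hn
      linarith
    set t : ℝ := (n:ℝ) - 1 with ht
    have ht1 : (1:ℝ) ≤ t := by
      have : (2:ℝ) ≤ n := by exact_mod_cast hn
      rw [ht]; linarith
    have ht0 : (0:ℝ) < t := by linarith
    set S : ℝ := (s:ℝ) with hS
    have hS0 : (0:ℝ) ≤ S := Nat.cast_nonneg s
    set u : ℝ := 4 / (S + 4) with hu
    have hu_pos : 0 < u := by rw [hu]; positivity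
    have hu_le1 : u ≤ 1 := by
      rw [hu, div_le_one (by linarith)]
      linarith
    set B := insert x A with hB
    set Y := (univ : Finset (Fin n)) \ B with hY
    set a : ℝ := ∑ y ∈ Y, q n s y B with ha
    have ha_nonneg : 0 ≤ a := Finset.sum_nonneg fun y _ => Pr_nonneg hn _
    have hcardY : (Y.card : ℝ) ≤ t := by
      have h1 : Y.card = n - B.card := by
        rw [hY, Finset.card_sdiff_of_subset (Finset.subset_univ _), Finset.card_univ, Fintype.card_fin]
      have h2 : 1 ≤ B.card := Finset.card_pos.mpr ⟨x, mem_insert_self x A⟩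
      have h3 : Y.card ≤ n - 1 := by omega
      have h4 : ((n - 1 : ℕ) : ℝ) = t := by
        rw [ht]
        have : 1 ≤ n := by omega
        push_cast [Nat.cast_sub this]
        ring
      calc (Y.card : ℝ) ≤ ((n - 1 : ℕ) : ℝ) := by exact_mod_cast h3
        _ = t := h4
    have ha_le : a ≤ t * u := by
      have h1 : a ≤ Y.card • u := Finset.sum_le_card_nsmul Y _ u fun y _ => IH y B
      rw [nsmul_eq_mul] at h1
      calc a ≤ (Y.card : ℝ) * u := h1
        _ ≤ t * u := by
          apply mul_le_mul_of_nonneg_right hcardY (le_of_lt hu_pos)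
    set κ : ℝ := -Real.log (wt n false) with hκ
    have hwtf : wt n false = t / n := by
      rw [wt]
      simp only [if_neg Bool.false_ne_true, ht]
      field_simp
    have hκ_nonneg : 0 ≤ κ := by
      rw [hκ]
      have h1 : Real.log (wt n false) ≤ 0 :=
        Real.log_nonpos (le_of_lt (wt_pos hn false)) (by
          rw [hwtf, div_le_one hn0]; linarith)
      linarith
    have hκ_le : κ ≤ 1 / t := by
      rw [hκ, hwtf, ← Real.log_inv]
      have hinv : (t / (n:ℝ))⁻¹ = (n:ℝ) / t := by
        rw [inv_div]
      rw [hinv]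
      have := Real.log_le_sub_one_of_pos (show (0:ℝ) < (n:ℝ)/t by positivity)
      have heq : (n:ℝ)/t - 1 = 1/t := by
        field_simp
        rw [ht]; ring
      linarith [heq ▸ this]
    set b : ℝ := κ * a with hb
    have hb_nonneg : 0 ≤ b := mul_nonneg hκ_nonneg ha_nonneg
    have hb_le_u : b ≤ u := by
      calc b = κ * a := hb
        _ ≤ (1/t) * (t * u) := by
          apply mul_le_mul hκ_le ha_le ha_nonneg
          positivity
        _ = u := by field_simp
    have hkey : q n (s+1) x A ≤ 1 - Real.exp (-b) := by
      have := q_step hn x A s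
      have harg : Real.log (wt n false) * a = -b := by
        rw [hb, hκ]; ring
      rw [← hY, ← ha, harg] at this
      exact this
    have hexp2 : (1 - b/2)^2 ≤ Real.exp (-b) := by
      have h1 : 1 - b/2 ≤ Real.exp (-(b/2)) := by
        have := Real.add_one_le_exp (-(b/2))
        linarith
      have h2 : (1 - b/2)^2 ≤ Real.exp (-(b/2))^2 := by
        apply pow_le_pow_left₀ _ h1
        linarith
      have h3 : Real.exp (-(b/2))^2 = Real.exp (-b) := by
        rw [← Real.exp_nat_mul]
        congr 1
        push_cast
        ring
      linarith [h3 ▸ h2]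
    have hmono : b - b^2/4 ≤ u - u^2/4 := by
      nlinarith [hb_le_u, hb_nonneg, hu_le1]
    have hnum : u - u^2/4 ≤ 4 / (S + 5) := by
      rw [hu]
      have h45 : (0:ℝ) < S+4 := by linarith
      have h55 : (0:ℝ) < S+5 := by linarith
      have key : 4/(S+4) - (4/(S+4))^2/4 = (4*(S+3))/(S+4)^2 := by
        field_simp
        ring
      rw [key, div_le_div_iff₀ (by positivity) h55]
      nlinarith
    have hgoal : ((s+1 : ℕ):ℝ) + 4 = S + 5 := by push_cast [hS]; ring
    rw [hgoal]
    calc q n (s+1) x A ≤ 1 - Real.exp (-b) := hkey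
      _ ≤ 1 - (1 - b/2)^2 := by linarith [hexp2]
      _ = b - b^2/4 := by ring
      _ ≤ u - u^2/4 := hmono
      _ ≤ 4 / (S + 5) := hnum


lemma diam_to_hlp {ω : Cfg n} {x : Fin n} {s : ℕ} (hs : 1 ≤ s)
    (h : s ≤ compDiam (graphOf ω) x) : HLP ω x ∅ ((s+1)/2) := by
  classical
  set G := graphOf ω with hG
  have hpath : ∀ (z : Fin n), G.Reachable x z → (s+1)/2 ≤ G.dist x z → HLP ω x ∅ ((s+1)/2) := by
    intro z hz hdist
    obtain ⟨w, hw⟩ := hz.exists_walk_length_eq_dist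
    refine ⟨z, w.bypass, SimpleGraph.Walk.bypass_isPath w, ?_, by simp⟩
    have h1 : G.dist x z ≤ w.bypass.length := SimpleGraph.dist_le _
    omega
  rw [compDiam, Finset.le_sup_iff (show (⊥:ℕ) < s from hs)] at h
  obtain ⟨p, -, hp⟩ := h
  by_cases hreach : G.Reachable x p.1 ∧ G.Reachable x p.2
  swap
  · rw [if_neg hreach] at hp; omega
  rw [if_pos hreach] at hp
  have htri : G.dist p.1 p.2 ≤ G.dist x p.1 + G.dist x p.2 := by
    obtain ⟨w1, hw1⟩ := (hreach.1.symm).exists_walk_length_eq_dist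
    obtain ⟨w2, hw2⟩ := (hreach.2).exists_walk_length_eq_dist
    calc G.dist p.1 p.2 ≤ (w1.append w2).length := SimpleGraph.dist_le _
      _ = G.dist p.1 x + G.dist x p.2 := by
          rw [SimpleGraph.Walk.length_append, hw1, hw2]
      _ = G.dist x p.1 + G.dist x p.2 := by rw [SimpleGraph.dist_comm]
  have hmax : (s+1)/2 ≤ G.dist x p.1 ∨ (s+1)/2 ≤ G.dist x p.2 := by omega
  rcases hmax with hc | hc
  · exact hpath p.1 hreach.1 hc
  · exact hpath p.2 hreach.2 hc

lemma diam_tail (hn : 2 ≤ n) (x : Fin n) (s : ℕ) (hs : 1 ≤ s) :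
    Pr n (fun ω => s ≤ compDiam (graphOf ω) x) ≤ 8 / (s:ℝ) := by
  have h1 : Pr n (fun ω => s ≤ compDiam (graphOf ω) x) ≤ q n ((s+1)/2) x ∅ :=
    Pr_mono hn fun ω h => diam_to_hlp hs h
  have h2 : q n ((s+1)/2) x ∅ ≤ 4 / ((((s+1)/2 : ℕ):ℝ) + 4) := q_bound hn _ x ∅
  have hr : s ≤ 2 * ((s+1)/2) := by omega
  have hrR : (s:ℝ) ≤ 2 * (((s+1)/2 : ℕ):ℝ) := by exact_mod_cast hr
  have hs0 : (0:ℝ) < s := by exact_mod_cast hs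
  have h3 : 4 / ((((s+1)/2 : ℕ):ℝ) + 4) ≤ 8 / (s:ℝ) := by
    rw [div_le_div_iff₀ (by positivity) hs0]
    linarith
  linarith


lemma sum_odds : ∀ (T : ℕ), ∑ s ∈ Finset.Icc 1 T, (2*(s:ℝ)-1) = (T:ℝ)^2 := by
  intro T
  induction T with
  | zero => simp
  | succ T IH =>
    rw [Finset.sum_Icc_succ_top (by omega : 1 ≤ T + 1), IH]
    push_cast
    ring

open scoped Classical in
lemma moment_bound (hn : 2 ≤ n) (x : Fin n) {M : ℝ} (hM : 1 ≤ M) :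
    ∑ ω : Cfg n, W n ω * (min ((compDiam (graphOf ω) x : ℕ):ℝ) M)^2 ≤ 32 * M := by
  classical
  set K := ⌈M⌉₊ with hK
  have hM0 : (0:ℝ) < M := by linarith
  have hKM : (K:ℝ) ≤ M + 1 := le_of_lt (Nat.ceil_lt_add_one (le_of_lt hM0))
  have hMK : M ≤ (K:ℝ) := Nat.le_ceil M
  -- pointwise bound
  have hpt : ∀ ω : Cfg n, (min ((compDiam (graphOf ω) x : ℕ):ℝ) M)^2 ≤
      ∑ s ∈ Finset.Icc 1 K, (2*(s:ℝ)-1) * (if s ≤ compDiam (graphOf ω) x then 1 else 0) := by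
    intro ω
    set d := compDiam (graphOf ω) x with hd
    set T := min d K with hT
    have h1 : min ((d:ℕ):ℝ) M ≤ (T:ℝ) := by
      rw [hT]
      push_cast [Nat.cast_min]
      apply le_min
      · exact min_le_left _ _
      · exact le_trans (min_le_right _ _) hMK
    have h0 : 0 ≤ min ((d:ℕ):ℝ) M := le_min (Nat.cast_nonneg d) (le_of_lt hM0)
    have h2 : (min ((d:ℕ):ℝ) M)^2 ≤ (T:ℝ)^2 := by
      apply pow_le_pow_left₀ h0 h1
    have h3 : (T:ℝ)^2 = ∑ s ∈ Finset.Icc 1 T, (2*(s:ℝ)-1) := (sum_odds T).symm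
    have h4 : ∑ s ∈ Finset.Icc 1 T, (2*(s:ℝ)-1) ≤
        ∑ s ∈ Finset.Icc 1 K, (2*(s:ℝ)-1) * (if s ≤ d then 1 else 0) := by
      have hsub : Finset.Icc 1 T ⊆ Finset.Icc 1 K := by
        apply Finset.Icc_subset_Icc le_rfl
        rw [hT]; exact min_le_right _ _
      have heq : ∀ s ∈ Finset.Icc 1 T, (2*(s:ℝ)-1) = (2*(s:ℝ)-1) * (if s ≤ d then 1 else 0) := by
        intro s hs
        rw [Finset.mem_Icc] at hs
        have : s ≤ d := le_trans hs.2 (min_le_left _ _)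
        rw [if_pos this, mul_one]
      rw [Finset.sum_congr rfl heq]
      apply Finset.sum_le_sum_of_subset_of_nonneg hsub
      intro s hs _
      rw [Finset.mem_Icc] at hs
      have h1s : (1:ℝ) ≤ (s:ℝ) := by exact_mod_cast hs.1
      have : (0:ℝ) ≤ 2*(s:ℝ)-1 := by linarith
      positivity
    linarith
  -- sum over ω
  have hsum : ∑ ω : Cfg n, W n ω * (min ((compDiam (graphOf ω) x : ℕ):ℝ) M)^2 ≤
      ∑ s ∈ Finset.Icc 1 K, (2*(s:ℝ)-1) * Pr n (fun ω => s ≤ compDiam (graphOf ω) x) := by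
    calc ∑ ω : Cfg n, W n ω * (min ((compDiam (graphOf ω) x : ℕ):ℝ) M)^2
        ≤ ∑ ω : Cfg n, W n ω * ∑ s ∈ Finset.Icc 1 K,
            (2*(s:ℝ)-1) * (if s ≤ compDiam (graphOf ω) x then 1 else 0) := by
          apply Finset.sum_le_sum
          intro ω _
          exact mul_le_mul_of_nonneg_left (hpt ω) (W_nonneg hn ω)
      _ = ∑ ω : Cfg n, ∑ s ∈ Finset.Icc 1 K,
            (2*(s:ℝ)-1) * (if s ≤ compDiam (graphOf ω) x then W n ω else 0) := by
          apply Finset.sum_congr rfl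
          intro ω _
          rw [Finset.mul_sum]
          apply Finset.sum_congr rfl
          intro s _
          split <;> ring
      _ = ∑ s ∈ Finset.Icc 1 K, ∑ ω : Cfg n,
            (2*(s:ℝ)-1) * (if s ≤ compDiam (graphOf ω) x then W n ω else 0) := Finset.sum_comm
      _ = ∑ s ∈ Finset.Icc 1 K, (2*(s:ℝ)-1) * Pr n (fun ω => s ≤ compDiam (graphOf ω) x) := by
          apply Finset.sum_congr rfl
          intro s _
          rw [← Finset.mul_sum, Pr]
          congr 1
          apply Finset.sum_congr rfl
          intro ω _
          congr 1
  have hterm : ∀ s ∈ Finset.Icc 1 K,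
      (2*(s:ℝ)-1) * Pr n (fun ω => s ≤ compDiam (graphOf ω) x) ≤ 16 := by
    intro s hs
    rw [Finset.mem_Icc] at hs
    have h1s : 1 ≤ s := hs.1
    have h1sR : (1:ℝ) ≤ (s:ℝ) := by exact_mod_cast h1s
    have hs0 : (0:ℝ) < (s:ℝ) := by linarith
    have htail := diam_tail hn x s h1s
    have hPrnn := Pr_nonneg hn (fun ω => s ≤ compDiam (graphOf ω) x)
    calc (2*(s:ℝ)-1) * Pr n (fun ω => s ≤ compDiam (graphOf ω) x)
        ≤ (2*(s:ℝ)) * (8 / (s:ℝ)) := by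
          apply mul_le_mul _ htail hPrnn (by linarith)
          linarith
      _ = 16 := by field_simp; ring
  calc ∑ ω : Cfg n, W n ω * (min ((compDiam (graphOf ω) x : ℕ):ℝ) M)^2
      ≤ ∑ s ∈ Finset.Icc 1 K, (2*(s:ℝ)-1) * Pr n (fun ω => s ≤ compDiam (graphOf ω) x) := hsum
    _ ≤ ∑ s ∈ Finset.Icc 1 K, (16:ℝ) := Finset.sum_le_sum hterm
    _ = 16 * K := by
        rw [Finset.sum_const, Nat.card_Icc, nsmul_eq_mul]
        have : K + 1 - 1 = K := by omega
        rw [this]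
        ring
    _ ≤ 32 * M := by linarith


lemma erMeasure_singleton (hn : 2 ≤ n) (ω : Cfg n) : (erMeasure n {ω}).toReal = W n ω := by
  have h1n : (1:ℝ≥0∞) ≤ (n : ℝ≥0∞) := by
    exact_mod_cast Nat.one_le_of_lt hn
  have hmin : min ((n : ℝ≥0∞))⁻¹ 1 = (n : ℝ≥0∞)⁻¹ := by
    apply min_eq_left
    rw [ENNReal.inv_le_one]
    exact h1n
  have hinvle : (n : ℝ≥0∞)⁻¹ ≤ 1 := by rw [ENNReal.inv_le_one]; exact h1n
  have hsingle : ({ω} : Set (Cfg n)) = Set.univ.pi (fun e => ({ω e} : Set Bool)) := by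
    ext ω'
    simp only [Set.mem_singleton_iff, Set.mem_pi, Set.mem_univ, forall_true_left]
    rw [funext_iff]
  rw [erMeasure, hsingle, MeasureTheory.Measure.pi_pi]
  have happ : ∀ e : Sym2 (Fin n),
      ((PMF.bernoulli (min (n : ℝ≥0∞)⁻¹ 1).toNNReal
        (by simpa using ENNReal.toNNReal_mono ENNReal.one_ne_top (min_le_right ((n : ℝ≥0∞)⁻¹) 1))).toMeasure ({ω e} : Set Bool))
        = (if ω e then (n : ℝ≥0∞)⁻¹ else 1 - (n : ℝ≥0∞)⁻¹) := by
    intro e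
    have hne : (n : ℝ≥0∞)⁻¹ ≠ ⊤ := ne_top_of_le_ne_top ENNReal.one_ne_top hinvle
    rw [PMF.toMeasure_apply_singleton _ _ (measurableSet_singleton _)]
    simp only [PMF.bernoulli_apply, hmin]
    have hc : (((n:NNReal)⁻¹ : NNReal) : ℝ≥0∞) = (n:ℝ≥0∞)⁻¹ := by
      rw [ENNReal.coe_inv (by exact_mod_cast (show n ≠ 0 by omega)), ENNReal.coe_natCast]
    cases h : ω e <;> simp [ENNReal.coe_sub, ENNReal.coe_toNNReal hne, hc]
  rw [Finset.prod_congr rfl (fun e _ => happ e), ENNReal.toReal_prod]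
  unfold W
  apply Finset.prod_congr rfl
  intro e _
  rw [wt]
  cases h : ω e
  · simp only [Bool.false_eq_true, if_false]
    rw [ENNReal.toReal_sub_of_le hinvle ENNReal.one_ne_top]
    simp [ENNReal.toReal_inv]
  · simp [ENNReal.toReal_inv]

lemma integral_eq_sum (hn : 2 ≤ n) (f : Cfg n → ℝ) :
    ∫ ω, f ω ∂(erMeasure n) = ∑ ω : Cfg n, W n ω * f ω := by
  rw [MeasureTheory.integral_fintype (MeasureTheory.Integrable.of_finite)]
  apply Finset.sum_congr rfl
  intro ω _
  rw [smul_eq_mul, Measure.real, erMeasure_singleton hn]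

end
end ERP


/-- There is a universal constant `C > 0` such that for every `n ≥ 2`
and every `B ≥ 1`, the critical Erdős–Rényi graph `G(n, 1/n)` satisfies
`E[ (1/n) Σ_{x ∈ [n]} ( diam(C(x)) ∧ (B n^{1/3}) )² ] ≤ C B n^{1/3}`, i.e.
`E[ E_S[ ( diam(S₁) ∧ (B n^{1/3}) )² ] ] ≤ C B n^{1/3}`. -/
theorem size_biased_diam_second_moment :
    ∃ C > (0 : ℝ), ∀ n : ℕ, 2 ≤ n → ∀ B : ℝ, 1 ≤ B →
      (∫ ω, (1 / (n : ℝ)) * ∑ x : Fin n,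
          (min (compDiam (graphOf ω) x : ℝ) (B * (n : ℝ) ^ ((1 : ℝ) / 3))) ^ 2 ∂ erMeasure n)
        ≤ C * B * (n : ℝ) ^ ((1 : ℝ) / 3) := by
  
  refine ⟨32, by norm_num, ?_⟩
  intro n hn B hB
  have hn0 : (0:ℝ) < n := by
    have : (2:ℝ) ≤ (n:ℝ) := by exact_mod_cast hn
    linarith
  set M := B * (n:ℝ) ^ ((1:ℝ)/3) with hM
  have h13 : (1:ℝ) ≤ (n:ℝ) ^ ((1:ℝ)/3) :=
    Real.one_le_rpow (by exact_mod_cast Nat.one_le_of_lt hn) (by norm_num)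
  have hM1 : 1 ≤ M := by
    rw [hM]
    nlinarith
  rw [ERP.integral_eq_sum hn]
  have hswap : ∑ ω : ERP.Cfg n, ERP.W n ω *
        ((1/(n:ℝ)) * ∑ x : Fin n, (min ((compDiam (graphOf ω) x : ℕ):ℝ) M)^2)
      = (1/(n:ℝ)) * ∑ x : Fin n, ∑ ω : ERP.Cfg n,
          ERP.W n ω * (min ((compDiam (graphOf ω) x : ℕ):ℝ) M)^2 := by
    calc ∑ ω : ERP.Cfg n, ERP.W n ω *
            ((1/(n:ℝ)) * ∑ x : Fin n, (min ((compDiam (graphOf ω) x : ℕ):ℝ) M)^2)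
        = ∑ ω : ERP.Cfg n, ∑ x : Fin n,
            (1/(n:ℝ)) * (ERP.W n ω * (min ((compDiam (graphOf ω) x : ℕ):ℝ) M)^2) := by
          apply Finset.sum_congr rfl
          intro ω _
          rw [Finset.mul_sum, Finset.mul_sum]
          apply Finset.sum_congr rfl
          intro x _
          ring
      _ = ∑ x : Fin n, ∑ ω : ERP.Cfg n,
            (1/(n:ℝ)) * (ERP.W n ω * (min ((compDiam (graphOf ω) x : ℕ):ℝ) M)^2) :=
          Finset.sum_comm
      _ = (1/(n:ℝ)) * ∑ x : Fin n, ∑ ω : ERP.Cfg n,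
            ERP.W n ω * (min ((compDiam (graphOf ω) x : ℕ):ℝ) M)^2 := by
          rw [Finset.mul_sum]
          apply Finset.sum_congr rfl
          intro x _
          rw [Finset.mul_sum]
  rw [hswap]
  have hxbd : ∀ x : Fin n, ∑ ω : ERP.Cfg n,
      ERP.W n ω * (min ((compDiam (graphOf ω) x : ℕ):ℝ) M)^2 ≤ 32 * M :=
    fun x => ERP.moment_bound hn x hM1
  have hsum : ∑ x : Fin n, ∑ ω : ERP.Cfg n,
      ERP.W n ω * (min ((compDiam (graphOf ω) x : ℕ):ℝ) M)^2 ≤ (n:ℝ) * (32 * M) := by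
    have := Finset.sum_le_card_nsmul Finset.univ
      (fun x : Fin n => ∑ ω : ERP.Cfg n,
        ERP.W n ω * (min ((compDiam (graphOf ω) x : ℕ):ℝ) M)^2) (32 * M)
      (fun x _ => hxbd x)
    rw [Finset.card_univ, Fintype.card_fin, nsmul_eq_mul] at this
    exact this
  calc (1/(n:ℝ)) * ∑ x : Fin n, ∑ ω : ERP.Cfg n,
        ERP.W n ω * (min ((compDiam (graphOf ω) x : ℕ):ℝ) M)^2
      ≤ (1/(n:ℝ)) * ((n:ℝ) * (32 * M)) := by
        apply mul_le_mul_of_nonneg_left hsum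
        positivity
    _ = 32 * M := by field_simp
    _ = 32 * B * (n:ℝ) ^ ((1:ℝ)/3) := by rw [hM]; ring
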